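/- Let K be a symmetric convex polytope in ℝ^n, let θ ∈ G_K with s_θ = min{s > 0 : g(θ,s) = 1}, and let p ≥ 1 be large enough that p·h_K(θ)/(p+n−1) ≥ s_θ. Then the maximum of the function t ↦ t^p · f_{K,θ}(t) on [0, h_K(θ)] is attained at t_p = p·h_K(θ)/(p+n−1). -/

import Mathlib

open MeasureTheory Filter Set Metric
open scoped RealInnerProductSpace Topology ENNReal NNReal

noncomputable section

/-- Euclidean space `ℝ^n`. -/
abbrev Euc (n : ℕ) := EuclideanSpace ℝ (Fin n)

/-- The support function `h_K(θ) = sup_{x ∈ K} ⟨x, θ⟩` of a set `K ⊆ ℝ^n`. -/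
noncomputable def suppFn {n : ℕ} (K : Set (Euc n)) (θ : Euc n) : ℝ :=
  sSup ((fun x => ⟪x, θ⟫) '' K)

/-- `g(θ, s)`: the number of vertices `v ∈ V` with `⟨v, θ⟩ ≥ s`. -/
noncomputable def gCount {n : ℕ} (V : Finset (Euc n)) (θ : Euc n) (s : ℝ) : ℕ :=
  {v ∈ (V : Set (Euc n)) | s ≤ ⟪v, θ⟫}.ncard

/-- `B_K`: the directions `θ ∈ S^{n-1}` with `g(θ,s) > 1` for all `s ≤ h_K(θ)`. -/
def badSet {n : ℕ} (K : Set (Euc n)) (V : Finset (Euc n)) : Set (Euc n) :=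
  {θ | ‖θ‖ = 1 ∧ ∀ s ≤ suppFn K θ, 1 < gCount V θ s}

/-- `G_K`: the directions `θ ∈ S^{n-1}` with `g(θ,s) = 1` for some `s < h_K(θ)`. -/
def goodSet {n : ℕ} (K : Set (Euc n)) (V : Finset (Euc n)) : Set (Euc n) :=
  {θ | ‖θ‖ = 1 ∧ ∃ s < suppFn K θ, gCount V θ s = 1}

/-- `s_θ = min {s > 0 : g(θ,s) = 1}`. -/
noncomputable def sTheta {n : ℕ} (V : Finset (Euc n)) (θ : Euc n) : ℝ :=
  sInf {s | 0 < s ∧ gCount V θ s = 1}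

/-- `A(δ)`: the directions `θ ∈ S^{n-1}` at distance `< δ` from some `u ∈ B_K`. -/
def Aset {n : ℕ} (K : Set (Euc n)) (V : Finset (Euc n)) (δ : ℝ) : Set (Euc n) :=
  {θ | ‖θ‖ = 1 ∧ ∃ u ∈ badSet K V, ‖θ - u‖ < δ}

/-- The parallel section function `f_{K,θ}(t) = vol_{n-1}(K ∩ (θ^⊥ + tθ))`, the
`(n-1)`-dimensional (Hausdorff) volume of the slice of `K` at height `t` in direction `θ`. -/
noncomputable def sliceVol {n : ℕ} (K : Set (Euc n)) (θ : Euc n) (t : ℝ) : ℝ :=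
  (μH[(n : ℝ) - 1] (K ∩ {x : Euc n | ⟪x, θ⟫ = t})).toReal

/-- For a symmetric convex polytope `K`, `θ ∈ G_K` and `p ≥ 1` large enough that
`p h_K(θ)/(p+n-1) ≥ s_θ`, the maximum of `t ↦ t^p f_{K,θ}(t)` on `[0, h_K(θ)]` is attained
at `t_p = p h_K(θ)/(p+n-1)`. -/
private lemma aux_calc {p d h t : ℝ} (hp : 1 ≤ p) (hd : 0 < d) (hh : 0 < h)
    (ht0 : 0 ≤ t) (hth : t ≤ h) :
    t ^ p * ((h - t) / (h - p * h / (p + d))) ^ d ≤ (p * h / (p + d)) ^ p := by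
  have hpd : 0 < p + d := by linarith
  set tp := p * h / (p + d) with htp
  have htp_pos : 0 < tp := by rw [htp]; positivity
  have htph : tp < h := by
    rw [htp, div_lt_iff₀ hpd]; nlinarith
  have hhtp : 0 < h - tp := by linarith
  set x := t / tp with hx_def
  set y := (h - t) / (h - tp) with hy_def
  have hx : 0 ≤ x := div_nonneg ht0 htp_pos.le
  have hy : 0 ≤ y := div_nonneg (by linarith) hhtp.le
  have hsum : p / (p + d) * x + d / (p + d) * y = 1 := by
    rw [hx_def, hy_def, htp]
    have h1 : h - p * h / (p + d) = d * h / (p + d) := by field_simp; ring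
    rw [h1]
    field_simp
    ring
  have key : x ^ (p / (p + d)) * y ^ (d / (p + d)) ≤ 1 := by
    have this : x ^ (p / (p + d)) * y ^ (d / (p + d)) ≤
        p / (p + d) * x + d / (p + d) * y :=
      Real.geom_mean_le_arith_mean2_weighted
        (div_nonneg (by linarith : (0:ℝ) ≤ p) hpd.le) (div_nonneg hd.le hpd.le) hx hy
        (by field_simp)
    rw [hsum] at this
    exact this
  have key2 : x ^ p * y ^ d ≤ 1 := by
    have h0 : 0 ≤ x ^ (p / (p + d)) * y ^ (d / (p + d)) :=
      mul_nonneg (Real.rpow_nonneg hx _) (Real.rpow_nonneg hy _)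
    have := Real.rpow_le_one h0 key hpd.le
    rwa [Real.mul_rpow (Real.rpow_nonneg hx _) (Real.rpow_nonneg hy _),
      ← Real.rpow_mul hx, ← Real.rpow_mul hy, div_mul_cancel₀ _ hpd.ne',
      div_mul_cancel₀ _ hpd.ne'] at this
  have hxp : x ^ p = t ^ p / tp ^ p := Real.div_rpow ht0 htp_pos.le _
  rw [hxp] at key2
  have htpp : 0 < tp ^ p := Real.rpow_pos_of_pos htp_pos _
  calc t ^ p * y ^ d = (t ^ p / tp ^ p * y ^ d) * tp ^ p := by field_simp
    _ ≤ 1 * tp ^ p := mul_le_mul_of_nonneg_right key2 htpp.le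
    _ = tp ^ p := one_mul _

private lemma aux_meas {n : ℕ} {d : ℝ} (hd : 0 ≤ d) (x : Euc n) {c : ℝ} (hc : 0 < c)
    {A B : Set (Euc n)} (hAB : AffineMap.homothety x c '' A ⊆ B) :
    ENNReal.ofReal c ^ d * μH[d] A ≤ μH[d] B := by
  have h1 := MeasureTheory.hausdorffMeasure_homothety_image (𝕜 := ℝ) hd x (ne_of_gt hc) A
  have h2 : (ENNReal.ofReal c) ^ d * μH[d] A = ‖c‖₊ ^ d • μH[d] A := by
    rw [ENNReal.smul_def, ENNReal.coe_rpow_of_ne_zero (by simpa using hc.ne'),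
      ← enorm_eq_nnnorm, Real.enorm_eq_ofReal hc.le, smul_eq_mul]
  rw [h2, ← h1]
  exact measure_mono (Set.image_subset_iff.mpr (fun a ha => Set.mem_preimage.mpr (hAB ⟨a, ha, rfl⟩)))

private lemma aux_hull_le {n : ℕ} (W : Set (Euc n)) (θ : Euc n) (m : ℝ)
    (hW : ∀ w ∈ W, ⟪w, θ⟫ ≤ m) : ∀ x ∈ convexHull ℝ W, ⟪x, θ⟫ ≤ m := by
  intro x hx
  have hconv : Convex ℝ {w : Euc n | ⟪w, θ⟫ ≤ m} :=
    convex_halfSpace_le ⟨fun a b => inner_add_left a b θ, fun c a => real_inner_smul_left a θ c⟩ m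
  exact convexHull_min hW hconv hx

set_option maxHeartbeats 1000000 in
theorem stmt10 {n : ℕ} (K : Set (Euc n)) (V : Finset (Euc n))
    (hKV : K = convexHull ℝ (V : Set (Euc n)))
    (hVext : (V : Set (Euc n)) = K.extremePoints ℝ)
    (hsymm : ∀ x ∈ K, -x ∈ K)
    (θ : Euc n) (hθ : θ ∈ goodSet K V)
    (p : ℝ) (hp : 1 ≤ p)
    (hlarge : sTheta V θ ≤ p * suppFn K θ / (p + (n : ℝ) - 1)) :
    IsMaxOn (fun t : ℝ => t ^ p * sliceVol K θ t) (Icc 0 (suppFn K θ))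
      (p * suppFn K θ / (p + (n : ℝ) - 1)) := by
  classical
  obtain ⟨hθ1, s', hs'lt, hs'g⟩ := hθ
  set h := suppFn K θ with hh_def
  unfold gCount at hs'g
  obtain ⟨v, hvset⟩ := Set.ncard_eq_one.mp hs'g
  have hvV : v ∈ (V : Set (Euc n)) ∧ s' ≤ ⟪v, θ⟫ := by
    have : v ∈ {w ∈ (V : Set (Euc n)) | s' ≤ ⟪w, θ⟫} := by
      rw [hvset]; exact Set.mem_singleton v
    exact this
  have hVne : (V : Set (Euc n)).Nonempty := ⟨v, hvV.1⟩
  have hKconv : Convex ℝ K := hKV ▸ convex_convexHull ℝ _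
  have hvK : v ∈ K := hKV ▸ subset_convexHull ℝ _ hvV.1
  -- the maximum over V is attained and equals h
  obtain ⟨b, hbV, hbmax⟩ := V.exists_max_image (fun w => ⟪w, θ⟫)
    ⟨v, Finset.mem_coe.mp hvV.1⟩
  have hbK : b ∈ K := hKV ▸ subset_convexHull ℝ _ (Finset.mem_coe.mpr hbV)
  have hKle : ∀ x ∈ K, ⟪x, θ⟫ ≤ ⟪b, θ⟫ := by
    rw [hKV]
    exact aux_hull_le _ θ _ (fun w hw => hbmax w (Finset.mem_coe.mp hw))
  have hsup : h = ⟪b, θ⟫ := by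
    rw [hh_def]
    unfold suppFn
    apply le_antisymm
    · exact csSup_le ⟨⟪v, θ⟫, ⟨v, hvK, rfl⟩⟩ (by rintro r ⟨x, hx, rfl⟩; exact hKle x hx)
    · exact le_csSup ⟨⟪b, θ⟫, by rintro r ⟨x, hx, rfl⟩; exact hKle x hx⟩ ⟨b, hbK, rfl⟩
  have hbv : b = v := by
    have hbs : b ∈ {w ∈ (V : Set (Euc n)) | s' ≤ ⟪w, θ⟫} := by
      refine ⟨Finset.mem_coe.mpr hbV, ?_⟩
      have : ⟪v, θ⟫ ≤ ⟪b, θ⟫ := hKle v hvK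
      linarith [hvV.2]
    rw [hvset] at hbs
    exact hbs
  have hvtop : ⟪v, θ⟫ = h := by rw [hsup, hbv]
  have hKle' : ∀ x ∈ K, ⟪x, θ⟫ ≤ h := by
    intro x hx; rw [hsup]; exact hKle x hx
  have hs'h : s' < h := hs'lt
  have hwlt : ∀ w ∈ (V : Set (Euc n)), w ≠ v → ⟪w, θ⟫ < s' := by
    intro w hw hne
    by_contra hcon
    push_neg at hcon
    have : w ∈ {w ∈ (V : Set (Euc n)) | s' ≤ ⟪w, θ⟫} := ⟨hw, hcon⟩
    rw [hvset] at this
    exact hne this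
  have h0K : (0 : Euc n) ∈ K := by
    have := hKconv hvK (hsymm v hvK) (by norm_num : (0:ℝ) ≤ 1/2) (by norm_num : (0:ℝ) ≤ 1/2)
      (by norm_num)
    simpa using this
  have h0 : 0 ≤ h := by
    have := hKle' 0 h0K
    simpa using this
  rcases h0.eq_or_lt with hzero | hpos
  · -- h = 0 : trivial
    intro t ht
    have ht0 : t = 0 := le_antisymm (by rw [← hzero] at ht; exact ht.2) ht.1
    have htp0 : p * h / (p + (n : ℝ) - 1) = 0 := by rw [← hzero]; simp
    simp only [ht0, ← hh_def, htp0]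
    exact Set.mem_setOf.mpr le_rfl
  rcases Nat.eq_zero_or_pos n with rfl | hn1
  · exfalso
    have hz : θ = 0 := by ext i; exact i.elim0
    rw [hz] at hθ1
    simp at hθ1
  rcases eq_or_lt_of_le (Nat.succ_le_of_lt hn1) with hn1' | hn2
  · -- n = 1
    obtain rfl : n = 1 := hn1'.symm
    have hθθ : ⟪θ, θ⟫ = 1 := by
      rw [real_inner_self_eq_norm_mul_norm, hθ1]; norm_num
    have hinner : ∀ a c : Euc 1, ⟪a, c⟫ = a 0 * c 0 := by
      intro a c
      simp [PiLp.inner_apply, RCLike.inner_apply, Fin.sum_univ_one, mul_comm]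
    have hcoord : ∀ z : Euc 1, z = ⟪z, θ⟫ • θ := by
      intro z
      have hθ0 : θ 0 * θ 0 = 1 := by rw [← hinner]; exact hθθ
      ext i
      have hi : i = 0 := Subsingleton.elim i 0
      subst hi
      show z 0 = (⟪z, θ⟫ • θ) 0
      have hs : (⟪z, θ⟫ • θ) 0 = ⟪z, θ⟫ * θ 0 := rfl
      rw [hs, hinner]
      linear_combination (-(z 0)) * hθ0
    have hsub : ∀ t : ℝ, (K ∩ {x : Euc 1 | ⟪x, θ⟫ = t}).Subsingleton := by
      intro t x hx y hy
      have hx2 := hcoord x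
      have hy2 := hcoord y
      rw [hx.2] at hx2; rw [hy.2] at hy2
      rw [hx2, hy2]
    have hfh : K ∩ {x : Euc 1 | ⟪x, θ⟫ = h} = {v} :=
      (hsub h).eq_singleton_of_mem ⟨hvK, hvtop⟩
    have hd0 : ((1:ℕ):ℝ) - 1 = 0 := by norm_num
    have hfh1 : sliceVol K θ h = 1 := by
      unfold sliceVol
      rw [hfh, hd0, Measure.hausdorffMeasure_zero_singleton]
      simp
    have hflt : ∀ t : ℝ, sliceVol K θ t ≤ 1 := by
      intro t
      unfold sliceVol
      rw [hd0]
      have h1 := Measure.hausdorffMeasure_le_one_of_subsingleton (hsub t) le_rfl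
      have h2 := ENNReal.toReal_mono (by simp) h1
      simpa using h2
    have hp0 : p ≠ 0 := by linarith
    have htp : p * h / (p + ((1:ℕ):ℝ) - 1) = h := by
      push_cast
      rw [show p + 1 - 1 = p by ring, mul_comm, mul_div_assoc, div_self hp0, mul_one]
    intro t ht
    simp only [Set.mem_setOf_eq, htp]
    calc t ^ p * sliceVol K θ t ≤ t ^ p * 1 :=
          mul_le_mul_of_nonneg_left (hflt t) (Real.rpow_nonneg ht.1 p)
      _ = t ^ p := mul_one _
      _ ≤ h ^ p := Real.rpow_le_rpow ht.1 ht.2 (by linarith)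
      _ = h ^ p * sliceVol K θ h := by rw [hfh1, mul_one]
  -- n ≥ 2
  have hn2' : (2:ℝ) ≤ (n:ℝ) := by exact_mod_cast hn2
  set d : ℝ := (n:ℝ) - 1 with hd_def
  have hd0 : 0 < d := by rw [hd_def]; linarith
  have hpd : 0 < p + d := by linarith
  set tp := p * h / (p + (n:ℝ) - 1) with htp_def
  have htp_eq : tp = p * h / (p + d) := by rw [htp_def, hd_def]; ring_nf
  have htp0 : 0 < tp := by
    rw [htp_eq]; exact div_pos (mul_pos (by linarith) hpos) hpd
  have htplt : tp < h := by
    rw [htp_eq, div_lt_iff₀ hpd]; nlinarith [mul_pos hpos hd0]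
  have hStar : gCount V θ h = 1 := by
    unfold gCount
    have heq : {w ∈ (V : Set (Euc n)) | h ≤ ⟪w, θ⟫} = {v} := by
      ext w
      constructor
      · rintro ⟨hwV, hwh⟩
        by_contra hne
        exact absurd hwh (not_le.mpr (lt_trans (hwlt w hwV hne) hs'h))
      · rintro rfl
        exact ⟨hvV.1, le_of_eq hvtop.symm⟩
    rw [heq, Set.ncard_singleton]
  have hm2 : ∀ w ∈ (V : Set (Euc n)), w ≠ v → ⟪w, θ⟫ ≤ sTheta V θ := by
    intro w hw hne
    have hSne : {s : ℝ | 0 < s ∧ gCount V θ s = 1}.Nonempty := ⟨h, hpos, hStar⟩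
    unfold sTheta
    apply le_csInf hSne
    rintro s ⟨hs0, hs1⟩
    unfold gCount at hs1
    obtain ⟨u, hu⟩ := Set.ncard_eq_one.mp hs1
    have hsh : s ≤ h := by
      by_contra hc
      push_neg at hc
      have huu : u ∈ {w ∈ (V : Set (Euc n)) | s ≤ ⟪w, θ⟫} := by
        rw [hu]; exact Set.mem_singleton u
      have hKu : u ∈ K := hKV ▸ subset_convexHull ℝ _ huu.1
      have := hKle' u hKu
      linarith [huu.2]
    have hvu : v = u := by
      have hvm : v ∈ {w ∈ (V : Set (Euc n)) | s ≤ ⟪w, θ⟫} := ⟨hvV.1, by rw [hvtop]; exact hsh⟩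
      rw [hu] at hvm
      exact hvm
    have hwnot : w ∉ ({u} : Set (Euc n)) := by rw [← hvu]; exact hne
    rw [← hu] at hwnot
    have hns : ¬ (s ≤ ⟪w, θ⟫) := fun hc => hwnot ⟨hw, hc⟩
    linarith [not_le.mp hns]
  have hwtp : ∀ w ∈ (V : Set (Euc n)), w ≠ v → ⟪w, θ⟫ ≤ tp :=
    fun w hw hne => (hm2 w hw hne).trans hlarge
  have hV'ne : ((V.erase v : Finset (Euc n)) : Set (Euc n)).Nonempty := by
    by_contra hcon
    rw [Set.not_nonempty_iff_eq_empty] at hcon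
    have hVsub : (V : Set (Euc n)) ⊆ {v} := by
      intro w hw
      by_contra hne
      have hmem : w ∈ ((V.erase v : Finset (Euc n)) : Set (Euc n)) :=
        Finset.mem_coe.mpr (Finset.mem_erase.mpr ⟨hne, Finset.mem_coe.mp hw⟩)
      rw [hcon] at hmem
      exact hmem
    have hKsub : K ⊆ {v} := by
      rw [hKV]
      exact convexHull_min hVsub (convex_singleton v)
    have hneg : -v ∈ K := hsymm v hvK
    have hnv : -v = v := hKsub hneg
    have hiv : ⟪-v, θ⟫ = ⟪v, θ⟫ := by rw [hnv]
    rw [inner_neg_left, hvtop] at hiv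
    linarith
  have hzprop : ∀ z ∈ convexHull ℝ ((V.erase v : Finset (Euc n)) : Set (Euc n)),
      z ∈ K ∧ ⟪z, θ⟫ ≤ tp := by
    intro z hz
    constructor
    · rw [hKV]
      exact convexHull_mono
        (fun w hw => Finset.mem_coe.mpr (Finset.mem_of_mem_erase (Finset.mem_coe.mp hw))) hz
    · exact aux_hull_le _ θ tp
        (fun w hw => hwtp w (Finset.mem_coe.mpr (Finset.mem_of_mem_erase (Finset.mem_coe.mp hw)))
          (Finset.ne_of_mem_erase (Finset.mem_coe.mp hw))) z hz
  have hdecomp : ∀ x ∈ K, ∃ z ∈ convexHull ℝ ((V.erase v : Finset (Euc n)) : Set (Euc n)),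
      ∃ a bb : ℝ, 0 ≤ a ∧ 0 ≤ bb ∧ a + bb = 1 ∧ a • v + bb • z = x := by
    intro x hx
    rw [hKV] at hx
    have hins : (V : Set (Euc n)) = insert v ((V.erase v : Finset (Euc n)) : Set (Euc n)) := by
      rw [Finset.coe_erase, Set.insert_diff_singleton, Set.insert_eq_of_mem hvV.1]
    rw [hins, convexHull_insert hV'ne] at hx
    have hx' : ∃ z ∈ convexHull ℝ ((V.erase v : Finset (Euc n)) : Set (Euc n)),
        x ∈ segment ℝ v z := by simpa using hx
    obtain ⟨z, hz, hseg⟩ := hx'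
    obtain ⟨a, bb, ha, hb, hab, hxe⟩ :=
      (hseg : ∃ a bb : ℝ, 0 ≤ a ∧ 0 ≤ bb ∧ a + bb = 1 ∧ a • v + bb • z = x)
    exact ⟨z, hz, a, bb, ha, hb, hab, hxe⟩
  set S : ℝ → Set (Euc n) := fun t => K ∩ {x : Euc n | ⟪x, θ⟫ = t} with hS_def
  have hslice : ∀ t : ℝ, sliceVol K θ t = (μH[d] (S t)).toReal := fun t => rfl
  have hM1 : ∀ t : ℝ, 0 ≤ t → t < h →
      (AffineMap.homothety v ((h - tp)/(h - t)) '' S t) ⊆ S tp := by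
    rintro t ht0 hth y ⟨x, ⟨hxK, hxt⟩, rfl⟩
    obtain ⟨z, hz, a, bb, ha, hb, hab, hxe⟩ := hdecomp x hxK
    obtain ⟨hzK, hztp⟩ := hzprop z hz
    have hzh : ⟪z, θ⟫ < h := lt_of_le_of_lt hztp htplt
    have hxt' : ⟪x, θ⟫ = t := hxt
    have hxθ : t = a * h + bb * ⟪z, θ⟫ := by
      conv_lhs => rw [← hxt']
      rw [← hxe, inner_add_left, real_inner_smul_left, real_inner_smul_left, hvtop]
    have hlev : h - t = bb * (h - ⟪z, θ⟫) := by linear_combination -hxθ - h * hab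
    have hbb0 : 0 < bb := by
      rcases hb.eq_or_lt with he | hl
      · exfalso; rw [← he] at hlev; simp at hlev; linarith
      · exact hl
    have hhz : 0 < h - ⟪z, θ⟫ := by linarith
    have hht : h - t ≠ 0 := by
      have : t < h := hth
      intro hcon; rw [sub_eq_zero] at hcon; exact absurd hcon.symm (ne_of_lt this)
    have hβval : (h - tp)/(h - t) * bb = (h - tp)/(h - ⟪z, θ⟫) := by
      rw [div_mul_eq_mul_div, div_eq_div_iff hht hhz.ne']
      linear_combination (-(h - tp)) * hlev
    have hβ0 : 0 ≤ (h - tp)/(h - ⟪z, θ⟫) := div_nonneg (by linarith) hhz.le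
    have hβ1 : (h - tp)/(h - ⟪z, θ⟫) ≤ 1 := by
      rw [div_le_one hhz]; linarith
    have him : AffineMap.homothety v ((h - tp)/(h - t)) x
        = (1 - (h - tp)/(h - ⟪z, θ⟫)) • v + ((h - tp)/(h - ⟪z, θ⟫)) • z := by
      rw [AffineMap.homothety_apply, vsub_eq_sub, vadd_eq_add, ← hβval]
      have hxv : x - v = bb • (z - v) := by
        rw [← hxe]
        have ha' : a = 1 - bb := by linarith
        rw [ha']
        module
      rw [hxv, smul_smul]
      module
    rw [him]
    refine ⟨hKconv hvK hzK (by linarith) hβ0 (by ring), ?_⟩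
    show ⟪(1 - (h - tp)/(h - ⟪z, θ⟫)) • v + ((h - tp)/(h - ⟪z, θ⟫)) • z, θ⟫ = tp
    rw [inner_add_left, real_inner_smul_left, real_inner_smul_left, hvtop]
    have hdm : (h - tp)/(h - ⟪z, θ⟫) * (h - ⟪z, θ⟫) = h - tp := div_mul_cancel₀ _ hhz.ne'
    linear_combination -hdm
  have hM2 : ∀ t : ℝ, 0 ≤ t → t ≤ tp →
      (AffineMap.homothety (-v) ((t + h)/(tp + h)) '' S tp) ⊆ S t := by
    rintro t ht0 http y ⟨x, ⟨hxK, hxl⟩, rfl⟩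
    have hth : 0 < tp + h := by linarith
    set σ := (t + h)/(tp + h) with hσ_def
    have hσ0 : 0 ≤ σ := div_nonneg (by linarith) hth.le
    have hσ1 : σ ≤ 1 := by rw [hσ_def, div_le_one hth]; linarith
    have him : AffineMap.homothety (-v) σ x = σ • x + (1 - σ) • (-v) := by
      rw [AffineMap.homothety_apply, vsub_eq_sub, vadd_eq_add]
      module
    rw [him]
    refine ⟨hKconv hxK (hsymm v hvK) hσ0 (by linarith) (by ring), ?_⟩
    show ⟪σ • x + (1 - σ) • (-v), θ⟫ = t
    rw [inner_add_left, real_inner_smul_left, real_inner_smul_left, inner_neg_left, hvtop, hxl]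
    have hcc : σ * (tp + h) = t + h := div_mul_cancel₀ _ hth.ne'
    linear_combination hcc
  have hM3 : ∀ t : ℝ, tp ≤ t → t ≤ h →
      (AffineMap.homothety v ((h - t)/(h - tp)) '' S tp) ⊆ S t := by
    rintro t htpt hth y ⟨x, ⟨hxK, hxl⟩, rfl⟩
    have hhtp : 0 < h - tp := by linarith
    set τ := (h - t)/(h - tp) with hτ_def
    have hτ0 : 0 ≤ τ := div_nonneg (by linarith) hhtp.le
    have hτ1 : τ ≤ 1 := by rw [hτ_def, div_le_one hhtp]; linarith
    have him : AffineMap.homothety v τ x = τ • x + (1 - τ) • v := by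
      rw [AffineMap.homothety_apply, vsub_eq_sub, vadd_eq_add]; module
    rw [him]
    refine ⟨hKconv hxK hvK hτ0 (by linarith) (by ring), ?_⟩
    show ⟪τ • x + (1 - τ) • v, θ⟫ = t
    rw [inner_add_left, real_inner_smul_left, real_inner_smul_left, hvtop, hxl]
    have hcc : τ * (h - tp) = h - t := div_mul_cancel₀ _ hhtp.ne'
    linear_combination -hcc
  have hSh : S h = {v} := by
    apply Set.eq_singleton_iff_unique_mem.mpr
    refine ⟨⟨hvK, hvtop⟩, ?_⟩
    rintro x ⟨hxK, hxh⟩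
    obtain ⟨z, hz, a, bb, ha, hb, hab, hxe⟩ := hdecomp x hxK
    obtain ⟨hzK, hztp⟩ := hzprop z hz
    have hxh' : ⟪x, θ⟫ = h := hxh
    have hxθ : h = a * h + bb * ⟪z, θ⟫ := by
      conv_lhs => rw [← hxh']
      rw [← hxe, inner_add_left, real_inner_smul_left, real_inner_smul_left, hvtop]
    have hlev : bb * (h - ⟪z, θ⟫) = 0 := by linear_combination hxθ + h * hab
    have hbb : bb = 0 := by
      rcases mul_eq_zero.mp hlev with hc | hc
      · exact hc
      · exfalso; linarith [lt_of_le_of_lt hztp htplt]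
    have ha1 : a = 1 := by linarith
    rw [hbb, ha1] at hxe
    simpa using hxe.symm
  have hμv : μH[d] ({v} : Set (Euc n)) = 0 := by
    rcases Measure.hausdorffMeasure_zero_or_top hd0 ({v} : Set (Euc n)) with h1 | h1
    · exact h1
    · rw [Measure.hausdorffMeasure_zero_singleton] at h1
      exact absurd h1 (by simp)
  intro t ht
  simp only [Set.mem_setOf_eq]
  rw [hslice t, hslice tp]
  by_cases hfin : μH[d] (S tp) = ⊤
  · have hrhs : (μH[d] (S tp)).toReal = 0 := by rw [hfin]; simp
    rw [hrhs, mul_zero]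
    rcases ht.1.eq_or_lt with h0t | h0t
    · rw [← h0t, Real.zero_rpow (by linarith : p ≠ 0), zero_mul]
    · rcases ht.2.eq_or_lt with hth | hth
      · rw [hth, hSh, hμv]
        simp
      · have hμt : μH[d] (S t) = ⊤ := by
          rcases le_total t tp with hle | hle
          · have hσ : 0 < (t + h)/(tp + h) := div_pos (by linarith) (by linarith)
            have hmm := aux_meas hd0.le (-v) hσ (hM2 t ht.1 hle)
            rw [hfin] at hmm
            have hne : ENNReal.ofReal ((t + h)/(tp + h)) ^ d ≠ 0 :=
              (ENNReal.rpow_pos (ENNReal.ofReal_pos.mpr hσ) ENNReal.ofReal_ne_top).ne'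
            rw [ENNReal.mul_top hne] at hmm
            exact top_le_iff.mp hmm
          · have hτ : 0 < (h - t)/(h - tp) := div_pos (by linarith) (by linarith)
            have hmm := aux_meas hd0.le v hτ (hM3 t hle ht.2)
            rw [hfin] at hmm
            have hne : ENNReal.ofReal ((h - t)/(h - tp)) ^ d ≠ 0 :=
              (ENNReal.rpow_pos (ENNReal.ofReal_pos.mpr hτ) ENNReal.ofReal_ne_top).ne'
            rw [ENNReal.mul_top hne] at hmm
            exact top_le_iff.mp hmm
        rw [hμt]
        simp
  · rcases ht.2.eq_or_lt with hth | hth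
    · rw [hth, hSh, hμv]
      simp only [ENNReal.toReal_zero, mul_zero]
      exact mul_nonneg (Real.rpow_nonneg htp0.le p) ENNReal.toReal_nonneg
    · have hc0 : 0 < (h - tp)/(h - t) := div_pos (by linarith) (by linarith)
      have hmeas := aux_meas hd0.le v hc0 (hM1 t ht.1 hth)
      have hq0 : 0 < (h - t)/(h - tp) := div_pos (by linarith) (by linarith)
      have hreal : ((h - tp)/(h - t)) ^ d * (μH[d] (S t)).toReal ≤ (μH[d] (S tp)).toReal := by
        have h1 := ENNReal.toReal_mono hfin hmeas
        rw [ENNReal.toReal_mul, ← ENNReal.toReal_rpow, ENNReal.toReal_ofReal hc0.le] at h1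
        exact h1
      have hcc : ((h - tp)/(h - t)) ^ d * ((h - t)/(h - tp)) ^ d = 1 := by
        rw [← Real.mul_rpow hc0.le hq0.le,
          show (h - tp)/(h - t) * ((h - t)/(h - tp)) = 1 by
            rw [div_mul_div_comm, mul_comm (h - t) (h - tp)]
            exact div_self (ne_of_gt (mul_pos (by linarith) (by linarith)))]
        exact Real.one_rpow d
      have hst : (μH[d] (S t)).toReal ≤ (μH[d] (S tp)).toReal * ((h - t)/(h - tp)) ^ d := by
        have h2 := mul_le_mul_of_nonneg_right hreal (Real.rpow_nonneg hq0.le d)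
        calc (μH[d] (S t)).toReal
            = ((h - tp)/(h - t)) ^ d * (μH[d] (S t)).toReal * ((h - t)/(h - tp)) ^ d := by
              rw [mul_comm (((h - tp)/(h - t)) ^ d), mul_assoc, hcc, mul_one]
          _ ≤ (μH[d] (S tp)).toReal * ((h - t)/(h - tp)) ^ d := h2
      have hcalc : t ^ p * ((h - t)/(h - tp)) ^ d ≤ tp ^ p := by
        have hac := aux_calc hp hd0 hpos ht.1 ht.2
        rw [← htp_eq] at hac
        exact hac
      calc t ^ p * (μH[d] (S t)).toReal
          ≤ t ^ p * ((μH[d] (S tp)).toReal * ((h - t)/(h - tp)) ^ d) :=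
            mul_le_mul_of_nonneg_left hst (Real.rpow_nonneg ht.1 p)
        _ = (t ^ p * ((h - t)/(h - tp)) ^ d) * (μH[d] (S tp)).toReal := by ring
        _ ≤ tp ^ p * (μH[d] (S tp)).toReal :=
            mul_le_mul_of_nonneg_right hcalc ENNReal.toReal_nonneg
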